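/- Let 1 < γ < χ and c ≥ 1 be real numbers, and for i = 0, 1, 2, … set β_i = (4χ/(χ−γ)) ((χ/γ)^{i+1} − 1). Suppose (M_i)_{i ≥ 0} is a sequence of non-negative real numbers satisfying M_{i+1} ≤ c^{(χ/γ)/β_{i+1}} · β_{i+1}^{(4χ/γ)/β_{i+1}} · M_i^{(χ/γ)(β_i/β_{i+1})} for every i ≥ 0. Then there exists a constant C = C(χ, γ, c) > 0, independent of the sequence (M_i), such that M_i ≤ C · M_0^{(χ/γ)^i β_0 / β_i} for all i ≥ 1; in particular, since (χ/γ)^i β_0 / β_i → 1 − γ/χ as i → ∞, one has limsup_{i → ∞} M_i ≤ C · M_0^{1 − γ/χ}. -/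

import Mathlib

open Filter

noncomputable section

/-- The exponent sequence `β_i = (4χ/(χ−γ))((χ/γ)^{i+1} − 1)` of the Moser iteration. -/
noncomputable def Bseq (χ γ : ℝ) (i : ℕ) : ℝ :=
  (4 * χ / (χ - γ)) * ((χ / γ) ^ (i + 1) - 1)

variable {χ γ c : ℝ}

lemma B_lb (hγ : 1 < γ) (hχ : γ < χ) (i : ℕ) : 4 * (χ/γ) ^ (i+1) ≤ Bseq χ γ i := by
  have hγ0 : (0:ℝ) < γ := by linarith
  have hθ : 1 < χ/γ := (one_lt_div hγ0).mpr hχ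
  have hK : 0 < 4 * χ / (χ - γ) := by
    apply div_pos (by linarith) (by linarith)
  have hd : χ - γ ≠ 0 := by linarith
  have hg : γ ≠ 0 := by linarith
  have hKθ : (4 * χ / (χ - γ)) * (χ/γ - 1) = 4 * (χ/γ) := by
    field_simp
  have h1 : (1:ℝ) ≤ (χ/γ) ^ i := one_le_pow₀ hθ.le
  have hp : (χ/γ) ^ (i+1) = (χ/γ) ^ i * (χ/γ) := pow_succ _ i
  have h2 : (χ/γ) ^ i * (χ/γ - 1) ≤ (χ/γ) ^ (i+1) - 1 := by nlinarith
  have h3 : (4 * χ / (χ - γ)) * ((χ/γ) ^ i * (χ/γ - 1)) = 4 * (χ/γ)^(i+1) := by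
    rw [hp]; linear_combination ((χ/γ) ^ i) * hKθ
  calc 4 * (χ/γ)^(i+1) = (4 * χ / (χ - γ)) * ((χ/γ) ^ i * (χ/γ - 1)) := h3.symm
    _ ≤ Bseq χ γ i := mul_le_mul_of_nonneg_left h2 hK.le

lemma B_one_le (hγ : 1 < γ) (hχ : γ < χ) (i : ℕ) : 1 ≤ Bseq χ γ i := by
  have hγ0 : (0:ℝ) < γ := by linarith
  have hθ : 1 < χ/γ := (one_lt_div hγ0).mpr hχ
  have := B_lb hγ hχ i
  have h1 : (1:ℝ) ≤ (χ/γ) ^ (i+1) := one_le_pow₀ hθ.le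
  linarith

lemma B_pos (hγ : 1 < γ) (hχ : γ < χ) (i : ℕ) : 0 < Bseq χ γ i :=
  lt_of_lt_of_le one_pos (B_one_le hγ hχ i)

noncomputable def eseq (χ γ : ℝ) (i : ℕ) : ℝ := (χ/γ) ^ i * Bseq χ γ 0 / Bseq χ γ i

lemma eseq_rec (hγ : 1 < γ) (hχ : γ < χ) (i : ℕ) :
    eseq χ γ i * ((χ/γ) * (Bseq χ γ i / Bseq χ γ (i+1))) = eseq χ γ (i+1) := by
  have h1 : Bseq χ γ i ≠ 0 := (B_pos hγ hχ i).ne'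
  have h2 : Bseq χ γ (i+1) ≠ 0 := (B_pos hγ hχ (i+1)).ne'
  unfold eseq
  field_simp
  linear_combination (-(χ * χ ^ i * γ⁻¹ ^ i * Bseq χ γ 0)) * (mul_inv_cancel₀ (show γ ≠ 0 by linarith))

lemma q_le_one (hγ : 1 < γ) (hχ : γ < χ) (i : ℕ) :
    (χ/γ) * (Bseq χ γ i / Bseq χ γ (i+1)) ≤ 1 := by
  have hγ0 : (0:ℝ) < γ := by linarith
  have hθ : 1 < χ/γ := (one_lt_div hγ0).mpr hχ
  have hK : 0 < 4 * χ / (χ - γ) := div_pos (by linarith) (by linarith)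
  have hnum : (χ/γ) * Bseq χ γ i ≤ Bseq χ γ (i+1) := by
    unfold Bseq
    have hp : (χ/γ) ^ (i+1+1) = (χ/γ) ^ (i+1) * (χ/γ) := pow_succ _ (i+1)
    nlinarith [mul_nonneg hK.le (sub_nonneg.mpr hθ.le)]
  rw [mul_div_assoc']
  exact (div_le_one (B_pos hγ hχ (i+1))).mpr hnum

lemma q_nonneg (hγ : 1 < γ) (hχ : γ < χ) (i : ℕ) :
    0 ≤ (χ/γ) * (Bseq χ γ i / Bseq χ γ (i+1)) := by
  have hγ0 : (0:ℝ) < γ := by linarith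
  exact mul_nonneg (div_nonneg (by linarith) (by linarith))
    (div_nonneg (B_pos hγ hχ i).le (B_pos hγ hχ (i+1)).le)

noncomputable def aseq (χ γ c : ℝ) (i : ℕ) : ℝ :=
  c ^ ((χ/γ) / Bseq χ γ i) * Bseq χ γ i ^ ((4 * χ / γ) / Bseq χ γ i)

lemma one_le_aseq (hγ : 1 < γ) (hχ : γ < χ) (hc : 1 ≤ c) (i : ℕ) : 1 ≤ aseq χ γ c i := by
  have hγ0 : (0:ℝ) < γ := by linarith
  have hB := B_pos hγ hχ i
  have he1 : 0 ≤ (χ/γ) / Bseq χ γ i := div_nonneg (div_nonneg (by linarith) (by linarith)) hB.le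
  have he2 : 0 ≤ (4 * χ / γ) / Bseq χ γ i :=
    div_nonneg (div_nonneg (by linarith) (by linarith)) hB.le
  have h1 : (1:ℝ) ≤ c ^ ((χ/γ) / Bseq χ γ i) := by
    calc (1:ℝ) = c ^ (0:ℝ) := (Real.rpow_zero c).symm
    _ ≤ _ := Real.rpow_le_rpow_of_exponent_le hc he1
  have h2 : (1:ℝ) ≤ Bseq χ γ i ^ ((4 * χ / γ) / Bseq χ γ i) := by
    calc (1:ℝ) = Bseq χ γ i ^ (0:ℝ) := (Real.rpow_zero _).symm
    _ ≤ _ := Real.rpow_le_rpow_of_exponent_le (B_one_le hγ hχ i) he2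
  unfold aseq; nlinarith

lemma aseq_le_exp (hγ : 1 < γ) (hχ : γ < χ) (hc : 1 ≤ c) (j : ℕ) :
    aseq χ γ c j ≤ Real.exp ((Real.log c / 4 + 4 * (χ/γ)) * ((Real.sqrt (χ/γ))⁻¹) ^ j) := by
  have hγ0 : (0:ℝ) < γ := by linarith
  have hθ : 1 < χ/γ := (one_lt_div hγ0).mpr hχ
  have hθ0 : (0:ℝ) < χ/γ := by linarith
  set θ := χ/γ with hθdef
  set B := Bseq χ γ j with hBdef
  have hB := B_pos hγ hχ j
  have hBlb := B_lb hγ hχ j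
  have hB1 := B_one_le hγ hχ j
  set s := Real.sqrt θ with hsdef
  have hs1 : 1 < s := by rw [hsdef]; rw [show (1:ℝ) = Real.sqrt 1 by simp]; exact
    (Real.sqrt_lt_sqrt zero_le_one hθ)
  have hs0 : 0 < s := by linarith
  have hss : s * s = θ := Real.mul_self_sqrt hθ0.le
  set r := s⁻¹ with hrdef
  have hr0 : 0 < r := inv_pos.mpr hs0
  have hr1 : r < 1 := by rw [hrdef]; exact inv_lt_one_of_one_lt₀ hs1
  have hrpow : ∀ n : ℕ, r ^ n = (s ^ n)⁻¹ := fun n => inv_pow s n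
  -- √B ≥ 2 * s^(j+1)
  have hsB : 2 * s ^ (j+1) ≤ Real.sqrt B := by
    rw [Real.le_sqrt (by positivity) (by linarith)]
    calc (2 * s ^ (j+1)) ^ 2 = 4 * (s*s) ^ (j+1) := by ring
      _ = 4 * θ ^ (j+1) := by rw [hss]
      _ ≤ B := hBlb
  have hsBpos : 0 < Real.sqrt B := Real.sqrt_pos.mpr hB
  -- log B ≤ 2 √B
  have hlogB : Real.log B ≤ 2 * Real.sqrt B := by
    have h1 : Real.log (Real.sqrt B) ≤ Real.sqrt B - 1 := Real.log_le_sub_one_of_pos hsBpos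
    have h2 : Real.log (Real.sqrt B) = Real.log B / 2 := Real.log_sqrt hB.le
    linarith
  -- log B / B ≤ r ^ j
  have hlogdiv : Real.log B / B ≤ r ^ j := by
    have h3 : Real.log B / B ≤ 2 / Real.sqrt B := by
      rw [div_le_div_iff₀ hB hsBpos]
      nlinarith [Real.mul_self_sqrt hB.le, Real.sqrt_nonneg B]
    have h4 : 2 / Real.sqrt B ≤ 2 / (2 * s ^ (j+1)) :=
      div_le_div_of_nonneg_left (by norm_num) (by positivity) hsB
    have h5 : 2 / (2 * s ^ (j+1)) = r ^ (j+1) := by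
      rw [hrpow]; field_simp
    have h6 : r ^ (j+1) ≤ r ^ j := pow_le_pow_of_le_one hr0.le hr1.le (Nat.le_succ j)
    linarith
  -- θ / B ≤ (1/4) * r ^ j
  have hθdiv : θ / B ≤ 1/4 * r ^ j := by
    have h3 : θ / B ≤ θ / (4 * θ ^ (j+1)) :=
      div_le_div_of_nonneg_left hθ0.le (by positivity) hBlb
    have h4 : θ / (4 * θ ^ (j+1)) = 1/4 * (θ⁻¹) ^ j := by
      rw [inv_pow, pow_succ]
      have : θ ^ j ≠ 0 := by positivity
      field_simp
    have h5 : (θ⁻¹) ^ j ≤ r ^ j := by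
      apply pow_le_pow_left₀ (by positivity)
      rw [hrdef]
      apply inv_anti₀ hs0
      nlinarith
    linarith [mul_le_mul_of_nonneg_left h5 (by norm_num : (0:ℝ) ≤ 1/4)]
  have hlogc : 0 ≤ Real.log c := Real.log_nonneg hc
  have hc0 : (0:ℝ) < c := by linarith
  have h4θ : 4 * χ / γ = 4 * θ := by rw [hθdef]; ring
  unfold aseq
  rw [← hBdef, ← hθdef, Real.rpow_def_of_pos hc0, Real.rpow_def_of_pos hB, ← Real.exp_add]
  apply Real.exp_le_exp.mpr
  rw [h4θ]
  have t1 : Real.log c * (θ / B) ≤ Real.log c / 4 * r ^ j := by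
    calc Real.log c * (θ / B) ≤ Real.log c * (1/4 * r ^ j) :=
          mul_le_mul_of_nonneg_left hθdiv hlogc
      _ = Real.log c / 4 * r ^ j := by ring
  have t2 : Real.log B * (4 * θ / B) ≤ 4 * θ * r ^ j := by
    calc Real.log B * (4 * θ / B) = 4 * θ * (Real.log B / B) := by ring
      _ ≤ 4 * θ * r ^ j := mul_le_mul_of_nonneg_left hlogdiv (by positivity)
  calc Real.log c * (θ / B) + Real.log B * (4 * θ / B)
      ≤ Real.log c / 4 * r ^ j + 4 * θ * r ^ j := add_le_add t1 t2
    _ = (Real.log c / 4 + 4 * θ) * r ^ j := by ring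

noncomputable def Dprod (χ γ c : ℝ) (n : ℕ) : ℝ := ∏ j ∈ Finset.range n, aseq χ γ c (j+1)

noncomputable def Cconst (χ γ c : ℝ) : ℝ :=
  Real.exp ((Real.log c / 4 + 4 * (χ/γ)) * (1 / (1 - (Real.sqrt (χ/γ))⁻¹)))

lemma one_le_Dprod (hγ : 1 < γ) (hχ : γ < χ) (hc : 1 ≤ c) (n : ℕ) : 1 ≤ Dprod χ γ c n := by
  induction n with
  | zero => simp [Dprod]
  | succ n ih =>
    have h := one_le_aseq hγ hχ hc (n+1)
    unfold Dprod at *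
    rw [Finset.prod_range_succ]
    nlinarith

lemma Dprod_le (hγ : 1 < γ) (hχ : γ < χ) (hc : 1 ≤ c) (n : ℕ) :
    Dprod χ γ c n ≤ Cconst χ γ c := by
  have hγ0 : (0:ℝ) < γ := by linarith
  have hθ : 1 < χ/γ := (one_lt_div hγ0).mpr hχ
  set θ := χ/γ with hθdef
  set s := Real.sqrt θ with hsdef
  have hs1 : 1 < s := by
    rw [hsdef, show (1:ℝ) = Real.sqrt 1 by simp]
    exact Real.sqrt_lt_sqrt zero_le_one hθ
  set r := s⁻¹ with hrdef
  have hr0 : 0 < r := inv_pos.mpr (by linarith)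
  have hr1 : r < 1 := inv_lt_one_of_one_lt₀ hs1
  set A := Real.log c / 4 + 4 * θ with hAdef
  have hA0 : 0 ≤ A := by
    have := Real.log_nonneg hc
    rw [hAdef]; positivity
  have h1 : Dprod χ γ c n ≤ ∏ j ∈ Finset.range n, Real.exp (A * r ^ (j+1)) := by
    apply Finset.prod_le_prod
    · intro j _; linarith [one_le_aseq hγ hχ hc (j+1)]
    · intro j _; exact aseq_le_exp hγ hχ hc (j+1)
  rw [← Real.exp_sum] at h1
  have h2 : ∑ j ∈ Finset.range n, A * r ^ (j+1) ≤ A * (1 / (1 - r)) := by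
    rw [← Finset.mul_sum]
    apply mul_le_mul_of_nonneg_left _ hA0
    have h3 : ∑ j ∈ Finset.range n, r ^ (j+1) ≤ ∑ j ∈ Finset.range n, r ^ j :=
      Finset.sum_le_sum fun j _ => pow_le_pow_of_le_one hr0.le hr1.le (Nat.le_succ j)
    have h4 : ∑ j ∈ Finset.range n, r ^ j ≤ (1 - r)⁻¹ := by
      apply Summable.sum_le_tsum _ (fun i _ => by positivity)
        ⟨_, hasSum_geometric_of_lt_one hr0.le hr1⟩ |>.trans
      rw [tsum_geometric_of_lt_one hr0.le hr1]
    rw [one_div]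
    linarith
  calc Dprod χ γ c n ≤ Real.exp (∑ j ∈ Finset.range n, A * r ^ (j+1)) := h1
    _ ≤ Cconst χ γ c := Real.exp_le_exp.mpr h2

lemma key_ind (hγ : 1 < γ) (hχ : γ < χ) (hc : 1 ≤ c) (M : ℕ → ℝ) (hM0 : ∀ i, 0 ≤ M i)
    (hrec : ∀ i : ℕ, M (i + 1)
      ≤ aseq χ γ c (i+1) * M i ^ ((χ/γ) * (Bseq χ γ i / Bseq χ γ (i + 1)))) :
    ∀ n : ℕ, M (n+1) ≤ Dprod χ γ c (n+1) * M 0 ^ eseq χ γ (n+1) := by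
  have hγ0 : (0:ℝ) < γ := by linarith
  intro n
  induction n with
  | zero =>
    have h := hrec 0
    have he1 : (χ/γ) * (Bseq χ γ 0 / Bseq χ γ 1) = eseq χ γ 1 := by
      unfold eseq; rw [pow_one]; ring
    have hD1 : Dprod χ γ c 1 = aseq χ γ c 1 := by
      unfold Dprod; simp
    rw [hD1, ← he1]
    exact h
  | succ n ih =>
    have h := hrec (n+1)
    set q := (χ/γ) * (Bseq χ γ (n+1) / Bseq χ γ (n+2)) with hqdef
    have hq0 : 0 ≤ q := q_nonneg hγ hχ (n+1)
    have hq1 : q ≤ 1 := q_le_one hγ hχ (n+1)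
    have hD1 : (1:ℝ) ≤ Dprod χ γ c (n+1) := one_le_Dprod hγ hχ hc (n+1)
    have hMe : (0:ℝ) ≤ M 0 ^ eseq χ γ (n+1) := Real.rpow_nonneg (hM0 0) _
    have h2 : M (n+1) ^ q ≤ (Dprod χ γ c (n+1) * M 0 ^ eseq χ γ (n+1)) ^ q :=
      Real.rpow_le_rpow (hM0 _) ih hq0
    have h3 : (Dprod χ γ c (n+1) * M 0 ^ eseq χ γ (n+1)) ^ q
        = Dprod χ γ c (n+1) ^ q * (M 0 ^ eseq χ γ (n+1)) ^ q :=
      Real.mul_rpow (by linarith) hMe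
    have h4 : (M 0 ^ eseq χ γ (n+1)) ^ q = M 0 ^ (eseq χ γ (n+1) * q) :=
      (Real.rpow_mul (hM0 0) _ _).symm
    have h5 : eseq χ γ (n+1) * q = eseq χ γ (n+2) := eseq_rec hγ hχ (n+1)
    have h6 : Dprod χ γ c (n+1) ^ q ≤ Dprod χ γ c (n+1) := by
      calc Dprod χ γ c (n+1) ^ q ≤ Dprod χ γ c (n+1) ^ (1:ℝ) :=
            Real.rpow_le_rpow_of_exponent_le hD1 hq1
        _ = Dprod χ γ c (n+1) := Real.rpow_one _
    have h7 : M (n+1) ^ q ≤ Dprod χ γ c (n+1) * M 0 ^ eseq χ γ (n+2) := by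
      rw [h3, h4, h5] at h2
      have := Real.rpow_nonneg (hM0 0) (eseq χ γ (n+2))
      nlinarith
    have ha0 : 0 ≤ aseq χ γ c (n+2) := by linarith [one_le_aseq hγ hχ hc (n+2)]
    have hD2 : Dprod χ γ c (n+2) = Dprod χ γ c (n+1) * aseq χ γ c (n+2) := by
      unfold Dprod; rw [Finset.prod_range_succ]
    calc M (n+2) ≤ aseq χ γ c (n+2) * M (n+1) ^ q := h
      _ ≤ aseq χ γ c (n+2) * (Dprod χ γ c (n+1) * M 0 ^ eseq χ γ (n+2)) :=
          mul_le_mul_of_nonneg_left h7 ha0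
      _ = Dprod χ γ c (n+2) * M 0 ^ eseq χ γ (n+2) := by rw [hD2]; ring

lemma eseq_eq (hγ : 1 < γ) (hχ : γ < χ) (n : ℕ) :
    eseq χ γ n = (χ/γ - 1) / (χ/γ - ((χ/γ)⁻¹) ^ n) := by
  have hγ0 : (0:ℝ) < γ := by linarith
  have hθ : 1 < χ/γ := (one_lt_div hγ0).mpr hχ
  have hθ0 : (0:ℝ) < χ/γ := by linarith
  have hBn : Bseq χ γ n ≠ 0 := (B_pos hγ hχ n).ne'
  have hden : χ/γ - ((χ/γ)⁻¹) ^ n ≠ 0 := by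
    have h1 : ((χ/γ)⁻¹) ^ n ≤ 1 :=
      pow_le_one₀ (inv_nonneg.mpr hθ0.le) (inv_le_one_of_one_le₀ hθ.le)
    intro h; nlinarith
  have hinv : ((χ/γ)⁻¹) ^ n * (χ/γ) ^ n = 1 := by
    rw [← mul_pow, inv_mul_cancel₀ hθ0.ne', one_pow]
  unfold eseq
  rw [div_eq_div_iff hBn hden]
  unfold Bseq
  linear_combination (-(4*χ/(χ-γ)) * ((χ/γ) - 1)) * hinv

lemma eseq_tendsto (hγ : 1 < γ) (hχ : γ < χ) :
    Filter.Tendsto (fun n : ℕ => eseq χ γ n) Filter.atTop (nhds (1 - γ/χ)) := by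
  have hγ0 : (0:ℝ) < γ := by linarith
  have hθ : 1 < χ/γ := (one_lt_div hγ0).mpr hχ
  have hθ0 : (0:ℝ) < χ/γ := by linarith
  have hpow : Filter.Tendsto (fun n : ℕ => ((χ/γ)⁻¹) ^ n) Filter.atTop (nhds 0) :=
    tendsto_pow_atTop_nhds_zero_of_lt_one (inv_nonneg.mpr hθ0.le) (inv_lt_one_of_one_lt₀ hθ)
  have h1 : Filter.Tendsto (fun n : ℕ => (χ/γ - 1) / (χ/γ - ((χ/γ)⁻¹) ^ n)) Filter.atTop
      (nhds ((χ/γ - 1) / (χ/γ - 0))) :=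
    Filter.Tendsto.div tendsto_const_nhds (tendsto_const_nhds.sub hpow) (by simpa using hθ0.ne')
  have h2 : (χ/γ - 1) / (χ/γ - 0) = 1 - γ/χ := by
    have hg : γ ≠ 0 := by linarith
    have hx : χ ≠ 0 := by intro h; rw [h] at hχ; linarith
    field_simp
    rw [mul_zero, sub_zero, mul_div_cancel_left₀ _ hx]
  rw [h2] at h1
  apply h1.congr
  intro n
  exact (eseq_eq hγ hχ n).symm

lemma eseq_pos (hγ : 1 < γ) (hχ : γ < χ) (n : ℕ) : 0 < eseq χ γ n := by
  have hγ0 : (0:ℝ) < γ := by linarith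
  have hθ0 : (0:ℝ) < χ/γ := div_pos (by linarith) hγ0
  unfold eseq
  have h0 := B_pos hγ hχ 0
  have hn := B_pos hγ hχ n
  positivity

/-- the elementary iteration behind the Moser iteration: if
`M_{i+1} ≤ c^{(χ/γ)/β_{i+1}} β_{i+1}^{(4χ/γ)/β_{i+1}} M_i^{(χ/γ)(β_i/β_{i+1})}`, then
`M_i ≤ C M_0^{(χ/γ)^i β_0/β_i}` for all `i ≥ 1` with `C = C(χ,γ,c)`, and since
`(χ/γ)^i β_0/β_i → 1 − γ/χ`, also `limsup M_i ≤ C M_0^{1−γ/χ}`. -/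
theorem stmt_15 (χ γ c : ℝ) (hγ : 1 < γ) (hχ : γ < χ) (hc : 1 ≤ c) :
    ∃ C : ℝ, 0 < C ∧
      (∀ M : ℕ → ℝ, (∀ i, 0 ≤ M i) →
        (∀ i : ℕ, M (i + 1)
          ≤ c ^ ((χ / γ) / Bseq χ γ (i + 1))
            * Bseq χ γ (i + 1) ^ ((4 * χ / γ) / Bseq χ γ (i + 1))
            * M i ^ ((χ / γ) * (Bseq χ γ i / Bseq χ γ (i + 1)))) →
        (∀ i : ℕ, 1 ≤ i → M i ≤ C * M 0 ^ ((χ / γ) ^ i * Bseq χ γ 0 / Bseq χ γ i)) ∧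
        Filter.limsup M Filter.atTop ≤ C * M 0 ^ (1 - γ / χ)) ∧
      Filter.Tendsto (fun i : ℕ => (χ / γ) ^ i * Bseq χ γ 0 / Bseq χ γ i)
        Filter.atTop (nhds (1 - γ / χ)) := by
  have hγ0 : (0:ℝ) < γ := by linarith
  have hχ0 : (0:ℝ) < χ := by linarith
  refine ⟨Cconst χ γ c, Real.exp_pos _, ?_, ?_⟩
  · intro M hM0 hrec
    have hrec' : ∀ i : ℕ, M (i + 1)
        ≤ aseq χ γ c (i+1) * M i ^ ((χ/γ) * (Bseq χ γ i / Bseq χ γ (i + 1))) := by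
      intro i; unfold aseq; exact hrec i
    have key := key_ind hγ hχ hc M hM0 hrec'
    have main : ∀ i : ℕ, 1 ≤ i → M i ≤ Cconst χ γ c * M 0 ^ eseq χ γ i := by
      intro i hi
      obtain ⟨n, rfl⟩ : ∃ n, i = n + 1 := ⟨i - 1, by omega⟩
      calc M (n+1) ≤ Dprod χ γ c (n+1) * M 0 ^ eseq χ γ (n+1) := key n
        _ ≤ Cconst χ γ c * M 0 ^ eseq χ γ (n+1) :=
            mul_le_mul_of_nonneg_right (Dprod_le hγ hχ hc (n+1))
              (Real.rpow_nonneg (hM0 0) _)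
    constructor
    · intro i hi
      have h := main i hi
      calc M i ≤ Cconst χ γ c * M 0 ^ eseq χ γ i := h
        _ = Cconst χ γ c * M 0 ^ ((χ / γ) ^ i * Bseq χ γ 0 / Bseq χ γ i) := by unfold eseq; rfl
    · have hL0 : 0 < 1 - γ/χ := by
        have h1 : γ/χ < 1 := (div_lt_one hχ0).mpr hχ
        linarith
      have hT : Filter.Tendsto (fun n : ℕ => Cconst χ γ c * M 0 ^ eseq χ γ n)
          Filter.atTop (nhds (Cconst χ γ c * M 0 ^ (1 - γ/χ))) := by
        rcases eq_or_lt_of_le (hM0 0) with h0 | h0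
        · have hz : ∀ n : ℕ, (M 0 : ℝ) ^ eseq χ γ n = 0 := fun n => by
            rw [← h0, Real.zero_rpow (eseq_pos hγ hχ n).ne']
          have hz2 : (M 0 : ℝ) ^ (1 - γ/χ) = 0 := by
            rw [← h0, Real.zero_rpow hL0.ne']
          simpa [hz, hz2] using (tendsto_const_nhds :
            Filter.Tendsto (fun _ : ℕ => (0:ℝ)) Filter.atTop (nhds 0))
        · exact Filter.Tendsto.const_mul _
            (Filter.Tendsto.rpow tendsto_const_nhds (eseq_tendsto hγ hχ) (Or.inl h0.ne'))
      have hle : ∀ᶠ n in Filter.atTop, M n ≤ Cconst χ γ c * M 0 ^ eseq χ γ n :=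
        Filter.eventually_atTop.mpr ⟨1, fun n hn => main n hn⟩
      have hcob : Filter.IsCoboundedUnder (· ≤ ·) Filter.atTop M :=
        Filter.isCoboundedUnder_le_of_le Filter.atTop hM0
      have h1 : Filter.limsup M Filter.atTop
          ≤ Filter.limsup (fun n : ℕ => Cconst χ γ c * M 0 ^ eseq χ γ n) Filter.atTop :=
        Filter.limsup_le_limsup hle hcob hT.isBoundedUnder_le
      rwa [hT.limsup_eq] at h1
  · have h := eseq_tendsto (χ := χ) (γ := γ) hγ hχ
    apply h.congr
    intro n
    unfold eseq
    rfl
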